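/- Let κ be an infinite cardinal, X : Type u, and α : X → Set X a function with #(α x) ≤ κ for every x : X. Then for every a : X there exists a least subset S ⊆ X such that a ∈ S and S is closed under α (i.e. for all x ∈ S, α x ⊆ S): S is contained in every subset of X containing a and closed under α. Moreover this least subcoalgebra S has cardinality #S ≤ κ. -/
import Mathlib


open Cardinal

universe u

def iterF {X : Type u} (α : X → Set X) (a : X) : ℕ → Set X
  | 0 => {a}
  | n + 1 => iterF α a n ∪ ⋃ x ∈ iterF α a n, α x

theorem generated_subcoalgebra_powerclass (κ : Cardinal.{u}) (hκ : ℵ₀ ≤ κ)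
    (X : Type u) (α : X → Set X) (hα : ∀ x : X, #(α x) ≤ κ) (a : X) :
    ∃ S : Set X,
      (a ∈ S ∧ ∀ x ∈ S, α x ⊆ S) ∧
      (∀ T : Set X, a ∈ T → (∀ x ∈ T, α x ⊆ T) → S ⊆ T) ∧
      #S ≤ κ := by
  set F : ℕ → Set X := iterF α a with hFdef
  have hF0 : F 0 = {a} := rfl
  have hFs : ∀ n, F (n + 1) = F n ∪ ⋃ x ∈ F n, α x := fun n => rfl
  have hcard : ∀ n, #(↥(F n)) ≤ κ := by
    intro n
    induction n with
    | zero =>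
      rw [hF0]
      simpa using (Cardinal.one_le_aleph0.trans hκ)
    | succ n ih =>
      rw [hFs]
      refine (Cardinal.mk_union_le _ _).trans ?_
      have h2 : #(⋃ x ∈ F n, α x) ≤ κ := by
        refine (Cardinal.mk_biUnion_le _ _).trans ?_
        calc #(↥(F n)) * ⨆ x : F n, #(α x) ≤ κ * κ := by
              refine mul_le_mul' ih ?_
              exact ciSup_le' fun x => hα x
          _ = κ := Cardinal.mul_eq_self hκ
      calc #(↥(F n)) + #(⋃ x ∈ F n, α x) ≤ κ + κ := add_le_add ih h2
        _ = κ := Cardinal.add_eq_self hκ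
  refine ⟨⋃ n, F n, ⟨?_, ?_⟩, ?_, ?_⟩
  · exact Set.mem_iUnion.2 ⟨0, rfl⟩
  · intro x hx y hy
    obtain ⟨n, hn⟩ := Set.mem_iUnion.1 hx
    refine Set.mem_iUnion.2 ⟨n + 1, ?_⟩
    rw [hFs]
    exact Or.inr (Set.mem_biUnion hn hy)
  · intro T haT hT
    refine Set.iUnion_subset fun n => ?_
    induction n with
    | zero => rw [hF0]; simpa using haT
    | succ n ih =>
      rw [hFs]
      refine Set.union_subset ih ?_
      exact Set.iUnion₂_subset fun x hx => hT x (ih hx)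
  · have h := Cardinal.mk_iUnion_le_lift F
    rw [Cardinal.lift_id'] at h
    refine h.trans ?_
    calc Cardinal.lift.{u} #ℕ * ⨆ n, Cardinal.lift.{0} #(↥(F n)) ≤ ℵ₀ * κ := by
          refine mul_le_mul' (by simp) (ciSup_le' fun n => by simpa using hcard n)
      _ = κ := Cardinal.aleph0_mul_eq hκ
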